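/- Let A be a unital C*-algebra such that for every x ∈ A with x ≠ 0 there exist a, b ∈ A with a x b = 1 (i.e., A is purely infinite and simple). Let ρ > 0 and let x ∈ A satisfy ‖x‖ > ρ. Then there are a, b ∈ A such that a x b = 1, ‖a‖ < ρ⁻¹, and ‖b‖ ≤ 1. -/

import Mathlib

set_option maxHeartbeats 1000000


/-- Let `A` be a unital C*-algebra which is purely infinite and simple, in the sense that for
every nonzero `x ∈ A` there are `a, b ∈ A` with `a x b = 1`.  If `ρ > 0` and `‖x‖ > ρ`, then
there are `a, b ∈ A` with `a x b = 1`, `‖a‖ < ρ⁻¹` and `‖b‖ ≤ 1`. -/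
theorem exists_one_eq_mul_with_norm_bounds
    {A : Type*} [NormedRing A] [StarRing A] [CStarRing A] [CompleteSpace A]
    [NormedAlgebra ℂ A] [StarModule ℂ A] [PartialOrder A] [StarOrderedRing A]
    (hpi : ∀ x : A, x ≠ 0 → ∃ a b : A, a * x * b = 1)
    (ρ : ℝ) (hρ : 0 < ρ) (x : A) (hx : ρ < ‖x‖) :
    ∃ a b : A, a * x * b = 1 ∧ ‖a‖ < ρ⁻¹ ∧ ‖b‖ ≤ 1 := by
  have hρ2 : (0:ℝ) < ρ ^ 2 := by positivity
  have hx0 : x ≠ 0 := by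
    intro h
    rw [h, norm_zero] at hx
    linarith
  haveI : Nontrivial A := ⟨x, 0, hx0⟩
  letI : CStarAlgebra A := { }
  set ν : ℝ := ‖x‖ ^ 2 with hν
  have hρν : ρ ^ 2 < ν := by
    have : 0 ≤ ‖x‖ := norm_nonneg x
    nlinarith
  set c₁ : ℝ := (ρ ^ 2 + ν) / 2 with hc₁
  have hc₁ρ : ρ ^ 2 < c₁ := by rw [hc₁]; linarith
  have hc₁ν : c₁ < ν := by rw [hc₁]; linarith
  have hc₁pos : (0:ℝ) < c₁ := hρ2.trans hc₁ρ
  set y : A := star x * x with hy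
  have hy0 : (0:A) ≤ y := star_mul_self_nonneg x
  have hysa : IsSelfAdjoint y := .of_nonneg hy0
  have hνy : ‖y‖ = ν := by rw [hy, CStarRing.norm_star_mul_self, hν, sq]
  set f : ℝ → ℝ := fun t => min 1 (max 0 ((t - c₁) / (ν - c₁))) with hf
  have hfc : Continuous f :=
    continuous_const.min (continuous_const.max ((continuous_id.sub continuous_const).div_const _))
  have hf_nonneg : ∀ t, 0 ≤ f t := fun t => le_min zero_le_one (le_max_left _ _)
  have hf_zero : ∀ t ≤ c₁, f t = 0 := by
    intro t ht
    have h1 : (t - c₁) / (ν - c₁) ≤ 0 :=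
      div_nonpos_iff.mpr (Or.inr ⟨by linarith, by linarith⟩)
    rw [hf]
    simp only [max_eq_left h1, min_eq_right zero_le_one]
  have hf_ν : f ν = 1 := by
    rw [hf]
    simp only
    rw [div_self (by linarith : ν - c₁ ≠ 0)]
    norm_num
  set k : ℝ → ℝ := fun t => t * (f t * f t) with hk
  have hkc : Continuous k := continuous_id.mul (hfc.mul hfc)
  have hk_nonneg : ∀ t, 0 ≤ k t := by
    intro t
    rcases le_or_gt t c₁ with h | h
    · simp [hk, hf_zero t h]
    · exact mul_nonneg (hc₁pos.trans h).le (mul_nonneg (hf_nonneg t) (hf_nonneg t))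
  set z : A := cfc k y with hz
  have hz0 : (0:A) ≤ z := cfc_nonneg fun t _ => hk_nonneg t
  have hzsa : IsSelfAdjoint z := .of_nonneg hz0
  have hν_mem : ν ∈ spectrum ℝ y := hνy ▸ CStarAlgebra.norm_mem_spectrum_of_nonneg hy0
  have hz_ne : z ≠ 0 := by
    intro h
    have hmem : k ν ∈ spectrum ℝ z := by
      rw [hz, cfc_map_spectrum k y hysa hkc.continuousOn]
      exact ⟨ν, hν_mem, rfl⟩
    rw [h, spectrum.zero_eq] at hmem
    have hkν : k ν = ν := by rw [hk]; simp [hf_ν]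
    rw [hkν] at hmem
    simp only [Set.mem_singleton_iff] at hmem
    have : (0:ℝ) < ν := hρ2.trans hρν
    linarith [hmem]
  obtain ⟨c, d, hc⟩ := hpi z hz_ne
  set w : A := star d * z * d with hw
  have hw0 : (0:A) ≤ w := star_left_conjugate_nonneg hz0 d
  -- z * z ≤ ‖z‖ • z
  have hzz : z * z ≤ ‖z‖ • z := by
    set s : A := CFC.sqrt z with hs
    have h1 : s * s = z := CFC.sqrt_mul_sqrt_self z hz0
    have h2 : IsSelfAdjoint s := .of_nonneg (CFC.sqrt_nonneg z)
    calc z * z = star s * z * s := by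
          rw [h2.star_eq, ← h1]
          noncomm_ring
      _ ≤ ‖z‖ • (star s * s) := CStarAlgebra.star_left_conjugate_le_norm_smul hzsa
      _ = ‖z‖ • z := by rw [h2.star_eq, h1]
  have key1 : (1:A) = star (z * d) * (star c * c) * (z * d) := by
    have h1 : star (z * d) * (star c * c) * (z * d) = star (c * z * d) * (c * z * d) := by
      simp only [star_mul, hzsa.star_eq]
      noncomm_ring
    rw [h1, hc, star_one, one_mul]
  have key2 : (1:A) ≤ (‖c‖ ^ 2 * ‖z‖) • w := by
    calc (1:A) = star (z * d) * (star c * c) * (z * d) := key1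
      _ ≤ star (z * d) * algebraMap ℝ A (‖c‖ ^ 2) * (z * d) :=
          star_left_conjugate_le_conjugate CStarAlgebra.star_mul_le_algebraMap_norm_sq _
      _ = ‖c‖ ^ 2 • (star d * (z * z) * d) := by
          rw [Algebra.algebraMap_eq_smul_one, mul_smul_comm, smul_mul_assoc, mul_one]
          congr 1
          simp only [star_mul, hzsa.star_eq]
          noncomm_ring
      _ ≤ ‖c‖ ^ 2 • (‖z‖ • w) := by
          refine smul_le_smul_of_nonneg_left ?_ (by positivity)
          calc star d * (z * z) * d ≤ star d * (‖z‖ • z) * d := star_left_conjugate_le_conjugate hzz d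
            _ = ‖z‖ • w := by rw [hw, mul_smul_comm, smul_mul_assoc]
      _ = (‖c‖ ^ 2 * ‖z‖) • w := (mul_smul _ _ _).symm
  have hcne : c ≠ 0 := by
    intro h
    rw [h, zero_mul, zero_mul] at hc
    exact zero_ne_one hc
  have hKpos : (0:ℝ) < ‖c‖ ^ 2 * ‖z‖ := by
    have h1 : 0 < ‖c‖ := norm_pos_iff.mpr hcne
    have h2 : 0 < ‖z‖ := norm_pos_iff.mpr hz_ne
    positivity
  have hwu : IsUnit w := by
    have h := CStarAlgebra.isUnit_of_le 1 key2
      (IsStrictlyPositive.iff_of_unital.mpr ⟨zero_le_one, isUnit_one⟩)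
    have : (Units.mk0 (‖c‖ ^ 2 * ‖z‖) hKpos.ne') • w = (‖c‖ ^ 2 * ‖z‖) • w := rfl
    rw [← this] at h
    exact (isUnit_smul_iff _ _).mp h
  set e : A := w ^ (-(1 / 2) : ℝ) with he
  have he0 : (0:A) ≤ e := CFC.rpow_nonneg
  have hesa : IsSelfAdjoint e := .of_nonneg he0
  have hewe : e * w * e = 1 := CFC.conjugate_rpow_neg_one_half w
    (IsStrictlyPositive.iff_of_unital.mpr ⟨hw0, hwu⟩)
  set r : A := d * e with hr
  have hrzr : star r * z * r = 1 := by
    rw [hr, star_mul, hesa.star_eq]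
    calc e * star d * z * (d * e) = e * (star d * z * d) * e := by noncomm_ring
      _ = 1 := by rw [← hw]; exact hewe
  -- f(y)^2 ≤ c₁⁻¹ • z
  have hineq : cfc (fun t => f t * f t) y ≤ c₁⁻¹ • z := by
    rw [hz, ← cfc_smul c₁⁻¹ k y hkc.continuousOn]
    refine cfc_mono ?_ (hfc.mul hfc).continuousOn (hkc.const_smul c₁⁻¹).continuousOn
    intro t _
    rcases le_or_gt t c₁ with h | h
    · simp only [hf_zero t h, mul_zero]
      exact smul_nonneg (inv_nonneg.mpr hc₁pos.le) (hk_nonneg t)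
    · have hft : 0 ≤ f t * f t := mul_nonneg (hf_nonneg t) (hf_nonneg t)
      have h1 : f t * f t * c₁ ≤ f t * f t * t := by
        exact mul_le_mul_of_nonneg_left h.le hft
      have h2 : f t * f t = c₁⁻¹ * (f t * f t * c₁) := by
        field_simp
      rw [smul_eq_mul, hk]
      calc f t * f t = c₁⁻¹ * (f t * f t * c₁) := h2
        _ ≤ c₁⁻¹ * (f t * f t * t) :=
            mul_le_mul_of_nonneg_left h1 (inv_nonneg.mpr hc₁pos.le)
        _ = c₁⁻¹ * (t * (f t * f t)) := by ring
  set fy : A := cfc f y with hfy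
  have hfysa : IsSelfAdjoint fy := by
    rw [hfy]
    exact IsSelfAdjoint.of_nonneg (cfc_nonneg fun t _ => hf_nonneg t)
  have hmid : fy * y * fy = z := by
    rw [hfy, hz]
    nth_rewrite 2 [← cfc_id' ℝ y]
    rw [← cfc_mul f (fun t : ℝ => t) y hfc.continuousOn continuous_id'.continuousOn,
      ← cfc_mul (fun t : ℝ => f t * t) f y ((hfc.mul continuous_id').continuousOn)
        hfc.continuousOn]
    exact cfc_congr fun t _ => by rw [hk]; ring
  set b0 : A := fy * r with hb0
  set a0 : A := star r * fy * star x with ha0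
  have hab : a0 * x * b0 = 1 := by
    rw [ha0, hb0]
    calc star r * fy * star x * x * (fy * r) = star r * (fy * (star x * x) * fy) * r := by
          noncomm_ring
      _ = star r * z * r := by rw [← hy, hmid]
      _ = 1 := hrzr
  have ha0norm : ‖a0‖ = 1 := by
    have h1 : a0 * star a0 = 1 := by
      rw [ha0]
      simp only [star_mul, star_star, hfysa.star_eq]
      calc star r * fy * star x * (x * (fy * r)) = star r * (fy * (star x * x) * fy) * r := by
            noncomm_ring
        _ = star r * z * r := by rw [← hy, hmid]
        _ = 1 := hrzr
    have h2 := CStarRing.norm_self_mul_star (x := a0)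
    rw [h1, CStarRing.norm_one] at h2
    nlinarith [norm_nonneg a0]
  have hb0sq : star b0 * b0 ≤ algebraMap ℝ A c₁⁻¹ := by
    have h1 : star b0 * b0 = star r * cfc (fun t => f t * f t) y * r := by
      rw [hb0, star_mul, hfysa.star_eq,
        cfc_mul f f y hfc.continuousOn hfc.continuousOn]
      noncomm_ring
    rw [h1]
    calc star r * cfc (fun t => f t * f t) y * r ≤ star r * (c₁⁻¹ • z) * r :=
        star_left_conjugate_le_conjugate hineq r
      _ = c₁⁻¹ • (star r * z * r) := by rw [mul_smul_comm, smul_mul_assoc]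
      _ = algebraMap ℝ A c₁⁻¹ := by rw [hrzr, Algebra.algebraMap_eq_smul_one]
  have hb0norm : ‖b0‖ ^ 2 ≤ c₁⁻¹ := by
    have hnn : (0:A) ≤ star b0 * b0 := star_mul_self_nonneg b0
    have h1 := (CStarAlgebra.norm_le_iff_le_algebraMap (star b0 * b0)
      (inv_nonneg.mpr hc₁pos.le) hnn).mpr hb0sq
    rwa [CStarRing.norm_star_mul_self, ← sq] at h1
  -- final scaling
  set t : ℝ := Real.sqrt c₁⁻¹ with ht
  have htpos : 0 < t := Real.sqrt_pos.mpr (inv_pos.mpr hc₁pos)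
  refine ⟨t • a0, t⁻¹ • b0, ?_, ?_, ?_⟩
  · rw [smul_mul_assoc, smul_mul_assoc, mul_smul_comm, smul_smul,
      mul_inv_cancel₀ htpos.ne', one_smul, hab]
  · rw [norm_smul, ha0norm, mul_one, Real.norm_eq_abs, abs_of_pos htpos]
    have h1 : c₁⁻¹ < (ρ⁻¹) ^ 2 := by
      rw [inv_pow]
      exact (inv_lt_inv₀ hc₁pos hρ2).mpr hc₁ρ
    calc t = Real.sqrt c₁⁻¹ := ht
      _ < Real.sqrt ((ρ⁻¹) ^ 2) := Real.sqrt_lt_sqrt (inv_nonneg.mpr hc₁pos.le) h1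
      _ = ρ⁻¹ := Real.sqrt_sq (inv_nonneg.mpr hρ.le)
  · rw [norm_smul, Real.norm_eq_abs, abs_of_pos (inv_pos.mpr htpos)]
    have hb0t : ‖b0‖ ≤ t := by
      rw [ht]
      exact (Real.le_sqrt (norm_nonneg b0) (inv_nonneg.mpr hc₁pos.le)).mpr hb0norm
    calc t⁻¹ * ‖b0‖ ≤ t⁻¹ * t := mul_le_mul_of_nonneg_left hb0t (inv_nonneg.mpr htpos.le)
      _ = 1 := inv_mul_cancel₀ htpos.ne'
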